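/- Let G = (V,E) be a finite simple graph and let O and O' be two orientations of G. Then O and O' have the same outdegree function if and only if O' can be obtained from O by a finite sequence of cycle-flips; moreover, the flipped cycles can be chosen so that each flipped cycle is contained in the set of edges on which the current orientation and O' differ. -/

import Mathlib

/-- An orientation of a simple graph: a choice of direction for each edge. -/
structure GraphOrientation {V : Type*} (G : SimpleGraph V) where
  dir : V → V → Prop
  adj_of_dir : ∀ u v, dir u v → G.Adj u v
  dir_iff_not : ∀ u v, G.Adj u v → (dir u v ↔ ¬ dir v u)

namespace GraphOrientation

variable {V : Type*} {G : SimpleGraph V}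

/-- The outdegree of a vertex: the number of edges directed away from it. -/
noncomputable def outDegree (O : GraphOrientation G) (v : V) : ℕ :=
  {u | O.dir v u}.ncard

/-- `v` is reachable from `u` by a directed path. -/
def Reaches (O : GraphOrientation G) : V → V → Prop :=
  Relation.ReflTransGen O.dir

/-- `C` is the edge set of a directed cycle of the orientation. -/
def IsDirCycle (O : GraphOrientation G) (C : Set (Sym2 V)) : Prop :=
  ∃ (v : V) (w : G.Walk v v), w.IsCycle ∧
    (∀ d ∈ w.darts, O.dir d.toProd.1 d.toProd.2) ∧ C = {e | e ∈ w.edges}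

/-- The orientation is strongly connected. -/
def IsStronglyConnected (O : GraphOrientation G) : Prop := ∀ u v, O.Reaches u v

/-- Every vertex is reachable from `v0`. -/
def IsConnectedFrom (O : GraphOrientation G) (v0 : V) : Prop := ∀ v, O.Reaches v0 v

/-- The set of edges on which two orientations differ. -/
def diffSet (O O' : GraphOrientation G) : Set (Sym2 V) :=
  {e | ∃ a b, e = s(a, b) ∧ O.dir a b ∧ O'.dir b a}

/-- `O'` is obtained from `O` by reversing exactly the edges of `A`. -/
def IsFlipOn (O O' : GraphOrientation G) (A : Set (Sym2 V)) : Prop :=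
  (∀ u v, s(u, v) ∈ A → (O'.dir u v ↔ O.dir v u)) ∧
    (∀ u v, s(u, v) ∉ A → (O'.dir u v ↔ O.dir u v))

/-- One cycle-flip step. -/
def CycleFlip (O O' : GraphOrientation G) : Prop :=
  ∃ C, O.IsDirCycle C ∧ O.IsFlipOn O' C

end GraphOrientation

/-- The cut defined by a vertex subset `U`: edges with exactly one endpoint in `U`. -/
def SimpleGraph.cutSet {V : Type*} (G : SimpleGraph V) (U : Set V) : Set (Sym2 V) :=
  {e | ∃ a b, e = s(a, b) ∧ G.Adj a b ∧ a ∈ U ∧ b ∉ U}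

/-- A cocycle: a minimal nonempty cut. -/
def SimpleGraph.IsCocycle {V : Type*} (G : SimpleGraph V) (D : Set (Sym2 V)) : Prop :=
  D.Nonempty ∧ (∃ U : Set V, D = G.cutSet U) ∧
    ∀ D' : Set (Sym2 V), D'.Nonempty → (∃ U : Set V, D' = G.cutSet U) → D' ⊆ D → D' = D

/-- A directed cocycle: a cocycle all of whose edges are directed toward the same side. -/
def GraphOrientation.IsDirCocycle {V : Type*} {G : SimpleGraph V}
    (O : GraphOrientation G) (D : Set (Sym2 V)) : Prop :=
  G.IsCocycle D ∧ ∃ U : Set V, D = G.cutSet U ∧ ∀ a b, O.dir a b → s(a, b) ∈ D → b ∈ U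

/-- The excess of a subset of vertices with respect to `δ : V → ℕ`. -/
noncomputable def SimpleGraph.excess {V : Type*} (G : SimpleGraph V) (δ : V → ℕ)
    (U : Finset V) : ℤ :=
  (∑ u ∈ U, (δ u : ℤ)) - ({e | e ∈ G.edgeSet ∧ ∀ x ∈ e, x ∈ U} : Set (Sym2 V)).ncard

/-- `C` is the edge set of a cycle of `G`. -/
def SimpleGraph.IsCycleEdgeSet {V : Type*} (G : SimpleGraph V) (C : Set (Sym2 V)) : Prop :=
  ∃ (v : V) (w : G.Walk v v), w.IsCycle ∧ C = {e | e ∈ w.edges}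

/-- The number of connected components of the spanning subgraph `(V, S)`. -/
noncomputable def numComponents (V : Type*) (S : Set (Sym2 V)) : ℕ :=
  Nat.card (SimpleGraph.fromEdgeSet S).ConnectedComponent

/-- One cycle-flip step in which the flipped cycle is contained in the set of edges on
which the current orientation differs from the target orientation `Ot`. -/
def GraphOrientation.CycleFlipWithinDiff {V : Type*} {G : SimpleGraph V}
    (Ot : GraphOrientation G) (O O' : GraphOrientation G) : Prop :=
  ∃ C, O.IsDirCycle C ∧ C ⊆ O.diffSet Ot ∧ O.IsFlipOn O' C


namespace GraphOrientation

variable {V : Type*} {G : SimpleGraph V}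

lemma not_dir_self (O : GraphOrientation G) (v : V) : ¬ O.dir v v :=
  fun h => G.irrefl (O.adj_of_dir _ _ h)

lemma not_dir_of_dir (O : GraphOrientation G) {u v : V} (h : O.dir u v) : ¬ O.dir v u :=
  (O.dir_iff_not u v (O.adj_of_dir u v h)).mp h

lemma dir_of_not_dir (O : GraphOrientation G) {u v : V} (h : G.Adj u v) (h2 : ¬ O.dir v u) :
    O.dir u v := (O.dir_iff_not u v h).mpr h2

lemma ext_dir {O O' : GraphOrientation G} (h : ∀ u v, O.dir u v ↔ O'.dir u v) : O = O' := by
  obtain ⟨d, a, i⟩ := O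
  obtain ⟨d', a', i'⟩ := O'
  have hd : d = d' := by
    funext u v
    exact propext (h u v)
  subst hd
  rfl

/-- Flip an orientation on a set of edges. -/
def flip (O : GraphOrientation G) (A : Set (Sym2 V)) : GraphOrientation G where
  dir u v := (s(u, v) ∈ A ∧ O.dir v u) ∨ (s(u, v) ∉ A ∧ O.dir u v)
  adj_of_dir u v h := by
    rcases h with ⟨_, h⟩ | ⟨_, h⟩
    · exact (O.adj_of_dir _ _ h).symm
    · exact O.adj_of_dir _ _ h
  dir_iff_not u v hadj := by
    have hs : s(v, u) = s(u, v) := Sym2.eq_swap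
    show ((s(u, v) ∈ A ∧ O.dir v u) ∨ (s(u, v) ∉ A ∧ O.dir u v)) ↔
      ¬ ((s(v, u) ∈ A ∧ O.dir u v) ∨ (s(v, u) ∉ A ∧ O.dir v u))
    rw [hs]
    by_cases hA : s(u, v) ∈ A
    · simp only [hA, true_and, not_true_eq_false, false_and, or_false, not_false_eq_true]
      exact O.dir_iff_not v u hadj.symm
    · simp only [hA, false_and, not_false_eq_true, true_and, false_or]
      exact O.dir_iff_not u v hadj

lemma flip_isFlipOn (O : GraphOrientation G) (A : Set (Sym2 V)) : O.IsFlipOn (O.flip A) A := by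
  constructor
  · intro u v h
    simp [flip, h]
  · intro u v h
    simp [flip, h]

lemma outDegree_eq_of_cycleFlip [Finite V] {O O₂ : GraphOrientation G}
    (h : O.CycleFlip O₂) : O.outDegree = O₂.outDegree := by
  obtain ⟨C, ⟨v, w, hc, hdir, hC⟩, hf⟩ := h
  funext x
  show {u | O.dir x u}.ncard = {u | O₂.dir x u}.ncard
  have hCmem : ∀ e, e ∈ C ↔ e ∈ w.edges := fun e => by rw [hC]; exact Iff.rfl
  have hne : w.support ≠ [] := w.support_ne_nil
  have h3 := hc.three_le_length
  have hlen : w.support.length = w.length + 1 := SimpleGraph.Walk.length_support w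
  have htne : w.support.tail ≠ [] := by
    intro h0
    have h1 : w.support.tail.length = 0 := by rw [h0]; rfl
    rw [List.length_tail, hlen] at h1; omega
  have hglast : w.support.getLast hne = v := SimpleGraph.Walk.getLast_support w
  have htlast : w.support.tail.getLast htne = v := by
    rw [List.getLast_tail]; exact hglast
  have hsupp_cons : w.support = v :: w.support.tail := SimpleGraph.Walk.support_eq_cons w
  have htnodup : w.support.tail.Nodup := hc.support_nodup
  have hv_not_dl : v ∉ w.support.tail.dropLast := by
    have hsplit := List.dropLast_append_getLast htne
    rw [htlast] at hsplit
    have hnd := htnodup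
    rw [← hsplit, List.nodup_append] at hnd
    intro hv
    exact hnd.2.2 v hv v (List.mem_singleton_self v) rfl
  have hdl_eq : w.support.dropLast = v :: w.support.tail.dropLast := by
    conv_lhs => rw [hsupp_cons]
    exact List.dropLast_cons_of_ne_nil htne
  have hdlnodup : w.support.dropLast.Nodup := by
    rw [hdl_eq]
    exact List.nodup_cons.mpr ⟨hv_not_dl, htnodup.sublist (List.dropLast_sublist _)⟩
  have hmem_dl : ∀ y ∈ w.support, y ∈ w.support.dropLast := by
    intro y hy
    rw [hsupp_cons, List.mem_cons] at hy
    rw [hdl_eq, List.mem_cons]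
    rcases hy with rfl | hy
    · left; rfl
    · have hsplit := List.dropLast_append_getLast htne
      rw [htlast] at hsplit
      rw [← hsplit, List.mem_append, List.mem_singleton] at hy
      rcases hy with hy | rfl
      · right; exact hy
      · left; rfl
  have hmem_tl : ∀ y ∈ w.support, y ∈ w.support.tail := by
    intro y hy
    rw [hsupp_cons, List.mem_cons] at hy
    rcases hy with rfl | hy
    · have := List.getLast_mem htne
      rwa [htlast] at this
    · exact hy
  have hfst_nodup : (w.darts.map (·.fst)).Nodup := by
    rw [SimpleGraph.Walk.map_fst_darts]; exact hdlnodup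
  have hsnd_nodup : (w.darts.map (·.snd)).Nodup := by
    rw [SimpleGraph.Walk.map_snd_darts]; exact htnodup
  have hedges_def : w.edges = w.darts.map SimpleGraph.Dart.edge := rfl
  have hdart_uniq_edge : ∀ d1 ∈ w.darts, ∀ d2 ∈ w.darts, d1.edge = d2.edge → d1 = d2 := by
    have := hc.isCircuit.isTrail.edges_nodup
    rw [hedges_def] at this
    exact fun d1 h1 d2 h2 he => List.inj_on_of_nodup_map this h1 h2 he
  by_cases hx : x ∈ w.support
  · -- x on the cycle
    obtain ⟨da, hda, hdafst⟩ : ∃ d ∈ w.darts, d.fst = x := by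
      have hx' := hmem_dl x hx
      rw [← SimpleGraph.Walk.map_fst_darts] at hx'
      exact List.mem_map.mp hx'
    obtain ⟨db, hdb, hdbsnd⟩ : ∃ d ∈ w.darts, d.snd = x := by
      have hx' := hmem_tl x hx
      rw [← SimpleGraph.Walk.map_snd_darts] at hx'
      exact List.mem_map.mp hx'
    set a := da.snd with ha_def
    set b := db.fst with hb_def
    have hOxa : O.dir x a := hdafst ▸ hdir da hda
    have hObx : O.dir b x := hdbsnd ▸ hdir db hdb
    have huniq_fst : ∀ d ∈ w.darts, d.fst = x → d = da := fun d hd hdx =>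
      List.inj_on_of_nodup_map hfst_nodup hd hda (by simp only [hdx, hdafst])
    have huniq_snd : ∀ d ∈ w.darts, d.snd = x → d = db := fun d hd hdx =>
      List.inj_on_of_nodup_map hsnd_nodup hd hdb (by simp only [hdx, hdbsnd])
    have hda_edge : da.edge = s(x, a) := by
      rw [SimpleGraph.dart_edge_eq_mk'_iff']
      exact Or.inl ⟨hdafst, rfl⟩
    have hdb_edge : db.edge = s(b, x) := by
      rw [SimpleGraph.dart_edge_eq_mk'_iff']
      exact Or.inl ⟨rfl, hdbsnd⟩
    have hxa_mem : s(x, a) ∈ C := by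
      rw [hCmem, hedges_def, ← hda_edge]
      exact List.mem_map_of_mem hda
    have hxb_mem : s(b, x) ∈ C := by
      rw [hCmem, hedges_def, ← hdb_edge]
      exact List.mem_map_of_mem hdb
    have hab : a ≠ b := by
      intro hab
      have hdb_edge' : db.edge = s(x, a) := by
        rw [SimpleGraph.dart_edge_eq_mk'_iff']
        exact Or.inr ⟨hab ▸ rfl, hdbsnd⟩
      have heq : da = db := hdart_uniq_edge da hda db hdb (hda_edge.trans hdb_edge'.symm)
      have hxa : x ≠ a := (O.adj_of_dir _ _ hOxa).ne
      apply hxa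
      calc x = da.fst := hdafst.symm
        _ = db.fst := by rw [heq]
        _ = a := hab.symm
    have key : {u | O₂.dir x u} = insert b ({u | O.dir x u} \ {a}) := by
      ext u
      simp only [Set.mem_insert_iff, Set.mem_diff, Set.mem_setOf_eq, Set.mem_singleton_iff]
      constructor
      · intro hu
        by_cases hmem : s(x, u) ∈ C
        · obtain ⟨d, hd, hde⟩ : ∃ d ∈ w.darts, d.edge = s(x, u) := by
            have := (hCmem _).mp hmem
            rw [hedges_def] at this
            exact List.mem_map.mp this
          rw [SimpleGraph.dart_edge_eq_mk'_iff'] at hde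
          rcases hde with ⟨h1, h2⟩ | ⟨h1, h2⟩
          · have hd_eq : d = da := huniq_fst d hd h1
            have hua : u = a := by rw [← h2, hd_eq]
            have hO := (hf.1 x u hmem).mp hu
            exact absurd hO (hua ▸ O.not_dir_of_dir hOxa)
          · have hd_eq : d = db := huniq_snd d hd h2
            left; rw [← h1, hd_eq]
        · right
          refine ⟨(hf.2 x u hmem).mp hu, ?_⟩
          rintro rfl
          exact hmem hxa_mem
      · rintro (rfl | ⟨hu, hua⟩)
        · have hmem : s(x, b) ∈ C := by rw [Sym2.eq_swap]; exact hxb_mem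
          exact (hf.1 x b hmem).mpr hObx
        · have hmem : s(x, u) ∉ C := by
            intro hmem
            obtain ⟨d, hd, hde⟩ : ∃ d ∈ w.darts, d.edge = s(x, u) := by
              have := (hCmem _).mp hmem
              rw [hedges_def] at this
              exact List.mem_map.mp this
            rw [SimpleGraph.dart_edge_eq_mk'_iff'] at hde
            rcases hde with ⟨h1, h2⟩ | ⟨h1, h2⟩
            · have hd_eq : d = da := huniq_fst d hd h1
              exact hua (by rw [← h2, hd_eq])
            · have hd_eq : d = db := huniq_snd d hd h2
              have hub : u = b := by rw [← h1, hd_eq]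
              exact O.not_dir_of_dir hObx (hub ▸ hu)
          exact (hf.2 x u hmem).mpr hu
    have hbS : b ∉ {u | O.dir x u} \ {a} := fun hb => O.not_dir_of_dir hObx hb.1
    have haS : a ∈ {u | O.dir x u} := hOxa
    rw [key, Set.ncard_insert_of_notMem hbS, Set.ncard_diff_singleton_add_one haS]
  · -- x not on the cycle
    have hnot : ∀ u, s(x, u) ∉ C := fun u hu =>
      hx (w.fst_mem_support_of_mem_edges ((hCmem _).mp hu))
    have hset : {u | O₂.dir x u} = {u | O.dir x u} := by
      ext u
      exact hf.2 x u (hnot u)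
    rw [hset]

end GraphOrientation

section ChainWalk

variable {V : Type*} {G : SimpleGraph V}

/-- Walk along a sequence of vertices. -/
def chainWalk (g : ℕ → V) (hadj : ∀ k, G.Adj (g k) (g (k + 1))) :
    (n k : ℕ) → G.Walk (g k) (g (k + n))
  | 0, k => (SimpleGraph.Walk.nil).copy rfl (by rw [Nat.add_zero])
  | n + 1, k =>
    SimpleGraph.Walk.cons (hadj k)
      ((chainWalk g hadj n (k + 1)).copy rfl (congrArg g (by omega)))

lemma chainWalk_support (g : ℕ → V) (hadj : ∀ k, G.Adj (g k) (g (k + 1))) (n k : ℕ) :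
    (chainWalk g hadj n k).support = (List.range (n + 1)).map (fun t => g (k + t)) := by
  induction n generalizing k with
  | zero => simp [chainWalk, List.range_succ]
  | succ n ih =>
    rw [chainWalk, SimpleGraph.Walk.support_cons, SimpleGraph.Walk.support_copy, ih,
      List.range_succ_eq_map (n := n + 1), List.map_cons, List.map_map, Nat.add_zero]
    congr 1
    apply List.map_congr_left
    intro a _
    simp only [Function.comp_apply]
    rw [show k + 1 + a = k + (a + 1) by omega]

lemma chainWalk_edges (g : ℕ → V) (hadj : ∀ k, G.Adj (g k) (g (k + 1))) (n k : ℕ) :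
    (chainWalk g hadj n k).edges = (List.range n).map (fun t => s(g (k + t), g (k + t + 1))) := by
  induction n generalizing k with
  | zero => simp [chainWalk]
  | succ n ih =>
    rw [chainWalk, SimpleGraph.Walk.edges_cons, SimpleGraph.Walk.edges_copy, ih,
      List.range_succ_eq_map (n := n), List.map_cons, List.map_map, Nat.add_zero]
    congr 1
    apply List.map_congr_left
    intro a _
    simp only [Function.comp_apply]
    rw [show k + 1 + a = k + (a + 1) by omega]

lemma chainWalk_length (g : ℕ → V) (hadj : ∀ k, G.Adj (g k) (g (k + 1))) (n k : ℕ) :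
    (chainWalk g hadj n k).length = n := by
  induction n generalizing k with
  | zero => simp [chainWalk]
  | succ n ih => rw [chainWalk]; simp [ih]

lemma chainWalk_darts (g : ℕ → V) (hadj : ∀ k, G.Adj (g k) (g (k + 1))) (n k : ℕ) :
    ∀ d ∈ (chainWalk g hadj n k).darts, ∃ t, t < n ∧ d.toProd = (g (k + t), g (k + t + 1)) := by
  induction n generalizing k with
  | zero => simp [chainWalk]
  | succ n ih =>
    intro d hd
    rw [chainWalk, SimpleGraph.Walk.darts_cons, SimpleGraph.Walk.darts_copy] at hd
    simp only [List.mem_cons] at hd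
    rcases hd with rfl | hd
    · exact ⟨0, by omega, by simp⟩
    · obtain ⟨t, ht, hprod⟩ := ih (k + 1) d hd
      exact ⟨t + 1, by omega, by rw [hprod]; congr 2 <;> omega⟩

end ChainWalk

namespace GraphOrientation

variable {V : Type*} {G : SimpleGraph V}

lemma diff_ncard_eq [Finite V] {O O' : GraphOrientation G}
    (h : O.outDegree = O'.outDegree) (x : V) :
    {u | O.dir x u ∧ O'.dir u x}.ncard = {u | O.dir u x ∧ O'.dir x u}.ncard := by
  have h1 : {u | O.dir x u} = {u | O.dir x u ∧ O'.dir x u} ∪ {u | O.dir x u ∧ O'.dir u x} := by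
    ext u
    simp only [Set.mem_setOf_eq, Set.mem_union]
    constructor
    · intro hu
      by_cases h' : O'.dir x u
      · exact Or.inl ⟨hu, h'⟩
      · exact Or.inr ⟨hu, O'.dir_of_not_dir (O.adj_of_dir _ _ hu).symm h'⟩
    · rintro (⟨hu, _⟩ | ⟨hu, _⟩) <;> exact hu
  have h2 : {u | O'.dir x u} = {u | O.dir x u ∧ O'.dir x u} ∪ {u | O.dir u x ∧ O'.dir x u} := by
    ext u
    simp only [Set.mem_setOf_eq, Set.mem_union]
    constructor
    · intro hu
      by_cases h' : O.dir x u
      · exact Or.inl ⟨h', hu⟩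
      · exact Or.inr ⟨O.dir_of_not_dir (O'.adj_of_dir _ _ hu).symm h', hu⟩
    · rintro (⟨_, hu⟩ | ⟨_, hu⟩) <;> exact hu
  have hd1 : Disjoint {u | O.dir x u ∧ O'.dir x u} {u | O.dir x u ∧ O'.dir u x} := by
    rw [Set.disjoint_left]
    rintro u ⟨_, h1'⟩ ⟨_, h2'⟩
    exact O'.not_dir_of_dir h1' h2'
  have hd2 : Disjoint {u | O.dir x u ∧ O'.dir x u} {u | O.dir u x ∧ O'.dir x u} := by
    rw [Set.disjoint_left]
    rintro u ⟨h1', _⟩ ⟨h2', _⟩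
    exact O.not_dir_of_dir h1' h2'
  have hx := congrFun h x
  simp only [outDegree] at hx
  rw [h1, h2, Set.ncard_union_eq hd1, Set.ncard_union_eq hd2] at hx
  omega

lemma exists_dirCycle_subset_diffSet [Finite V] {O O' : GraphOrientation G}
    (h : O.outDegree = O'.outDegree) (hne : (O.diffSet O').Nonempty) :
    ∃ C, O.IsDirCycle C ∧ C ⊆ O.diffSet O' := by
  classical
  set D : V → V → Prop := fun a b => O.dir a b ∧ O'.dir b a with hD_def
  have hsout : ∀ x, (∃ u, D u x) → ∃ u, D x u := by
    rintro x ⟨u, hu⟩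
    have hcount := diff_ncard_eq h x
    have hpos : 0 < {u | O.dir u x ∧ O'.dir x u}.ncard := by
      rw [Set.ncard_pos]
      exact ⟨u, hu.1, hu.2⟩
    rw [← hcount] at hpos
    obtain ⟨y, hy⟩ := (Set.ncard_pos (Set.toFinite _)).mp hpos
    exact ⟨y, hy.1, hy.2⟩
  obtain ⟨e, he⟩ := hne
  obtain ⟨a0, b0, he_eq, hab1, hab2⟩ := he
  let f : V → V := fun x => if hx : ∃ u, D x u then hx.choose else x
  have hfspec : ∀ x (hx : ∃ u, D x u), D x (f x) := by
    intro x hx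
    simp only [f, dif_pos hx]
    exact hx.choose_spec
  let g : ℕ → V := fun n => f^[n] b0
  have hgex : ∀ n, ∃ u, D (g n) u := by
    intro n
    induction n with
    | zero => exact hsout b0 ⟨a0, hab1, hab2⟩
    | succ n ih =>
      have hit : g (n + 1) = f (g n) := Function.iterate_succ_apply' f n b0
      rw [hit]
      exact hsout (f (g n)) ⟨g n, hfspec _ ih⟩
  have hstep : ∀ n, D (g n) (g (n + 1)) := by
    intro n
    have hit : g (n + 1) = f (g n) := Function.iterate_succ_apply' f n b0
    rw [hit]
    exact hfspec _ (hgex n)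
  have hPex : ∃ j, ∃ i, i < j ∧ g i = g j := by
    obtain ⟨m, n, hmn, hgmn⟩ := Finite.exists_ne_map_eq_of_infinite g
    rcases Nat.lt_or_ge m n with h' | h'
    · exact ⟨n, m, h', hgmn⟩
    · exact ⟨m, n, by omega, hgmn.symm⟩
  set j := Nat.find hPex with hj_def
  obtain ⟨i, hij, hgij⟩ := Nat.find_spec hPex
  have hinj : ∀ k l, k < l → l < j → g k ≠ g l := by
    intro k l hkl hlj hEq
    exact Nat.find_min hPex hlj ⟨k, hkl, hEq⟩
  set p := j - i with hp_def
  have hip : i + p = j := by omega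
  have hgp : g (i + p) = g i := by rw [hip]; exact hgij.symm
  have hp3 : 3 ≤ p := by
    rcases Nat.lt_or_ge p 3 with h' | h'
    · exfalso
      have hp1 : 1 ≤ p := by omega
      interval_cases p
      · have h1 := hstep i
        rw [hgp] at h1
        exact O.not_dir_self _ h1.1
      · have h1 := hstep i
        have h2 := hstep (i + 1)
        rw [show i + 1 + 1 = i + 2 by omega, hgp] at h2
        exact O.not_dir_of_dir h1.1 h2.1
    · exact h'
  have hgki : ∀ s t, s ≤ p → t ≤ p → g (i + s) = g (i + t) →
      s = t ∨ (s = 0 ∧ t = p) ∨ (s = p ∧ t = 0) := by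
    intro s t hs ht hEq
    by_cases hsp : s = p
    · subst hsp
      by_cases htp : t = p
      · left; omega
      · rw [hgp] at hEq
        by_cases ht0 : t = 0
        · right; right; exact ⟨rfl, ht0⟩
        · exact absurd hEq (hinj i (i + t) (by omega) (by omega))
    · by_cases htp : t = p
      · subst htp
        rw [hgp] at hEq
        by_cases hs0 : s = 0
        · right; left; exact ⟨hs0, rfl⟩
        · exact absurd hEq.symm (hinj i (i + s) (by omega) (by omega))
      · left
        rcases Nat.lt_trichotomy s t with h' | h' | h'
        · exact absurd hEq (hinj (i + s) (i + t) (by omega) (by omega))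
        · exact h'
        · exact absurd hEq.symm (hinj (i + t) (i + s) (by omega) (by omega))
  have hadj : ∀ k, G.Adj (g k) (g (k + 1)) := fun k => O.adj_of_dir _ _ (hstep k).1
  let w : G.Walk (g i) (g i) := (chainWalk g hadj p i).copy rfl hgp
  have hw_edges : w.edges = (List.range p).map (fun t => s(g (i + t), g (i + t + 1))) := by
    simp only [w, SimpleGraph.Walk.edges_copy]
    exact chainWalk_edges g hadj p i
  have hw_support : w.support = (List.range (p + 1)).map (fun t => g (i + t)) := by
    simp only [w, SimpleGraph.Walk.support_copy]
    exact chainWalk_support g hadj p i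
  have hw_darts : ∀ d ∈ w.darts, ∃ t, t < p ∧ d.toProd = (g (i + t), g (i + t + 1)) := by
    intro d hd
    simp only [w, SimpleGraph.Walk.darts_copy] at hd
    exact chainWalk_darts g hadj p i d hd
  have hw_len : w.length = p := by
    simp only [w, SimpleGraph.Walk.length_copy]
    exact chainWalk_length g hadj p i
  have hcyc : w.IsCycle := by
    refine ⟨⟨⟨?_⟩, ?_⟩, ?_⟩
    · rw [hw_edges]
      refine List.Nodup.map_on ?_ (List.nodup_range (n := p))
      intro t ht t' ht' hEq
      rw [List.mem_range] at ht ht'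
      rw [Sym2.eq_iff] at hEq
      rcases hEq with ⟨e1, e2⟩ | ⟨e1, e2⟩
      · have := hgki t t' (by omega) (by omega) e1
        omega
      · have h1 := hgki t (t' + 1) (by omega) (by omega) e1
        have h2 := hgki (t + 1) t' (by omega) (by omega) e2
        omega
    · intro hnil
      have h0 : w.length = 0 := by rw [hnil]; rfl
      omega
    · rw [hw_support, List.range_succ_eq_map, List.map_cons, List.tail_cons, List.map_map]
      refine List.Nodup.map_on ?_ (List.nodup_range (n := p))
      intro t ht t' ht' hEq
      rw [List.mem_range] at ht ht'
      simp only [Function.comp_apply] at hEq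
      have := hgki (t + 1) (t' + 1) (by omega) (by omega) hEq
      omega
  refine ⟨{e | e ∈ w.edges}, ⟨g i, w, hcyc, ?_, rfl⟩, ?_⟩
  · intro d hd
    obtain ⟨t, ht, hprod⟩ := hw_darts d hd
    rw [hprod]
    exact (hstep (i + t)).1
  · intro e' he'
    rw [Set.mem_setOf_eq, hw_edges, List.mem_map] at he'
    obtain ⟨t, ht, rfl⟩ := he'
    exact ⟨g (i + t), g (i + t + 1), rfl, (hstep (i + t)).1, (hstep (i + t)).2⟩

lemma diffSet_flip {O O' O₂ : GraphOrientation G} {C : Set (Sym2 V)}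
    (hC : C ⊆ O.diffSet O') (hf : O.IsFlipOn O₂ C) :
    O₂.diffSet O' = O.diffSet O' \ C := by
  ext e
  constructor
  · rintro ⟨a, b, rfl, h1, h2⟩
    have hmem : s(a, b) ∉ C := by
      intro hmem
      have hO : O.dir b a := (hf.1 a b hmem).mp h1
      obtain ⟨c, d, hcd, hc1, hc2⟩ := hC hmem
      rw [Sym2.eq_iff] at hcd
      rcases hcd with ⟨rfl, rfl⟩ | ⟨rfl, rfl⟩
      · exact O.not_dir_of_dir hO hc1
      · exact O'.not_dir_of_dir h2 hc2
    exact ⟨⟨a, b, rfl, (hf.2 a b hmem).mp h1, h2⟩, hmem⟩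
  · rintro ⟨⟨a, b, rfl, h1, h2⟩, hmem⟩
    exact ⟨a, b, rfl, (hf.2 a b hmem).mpr h1, h2⟩

lemma eq_of_diffSet_empty {O O' : GraphOrientation G} (h : O.diffSet O' = ∅) : O = O' := by
  apply ext_dir
  intro u v
  constructor
  · intro hd
    by_contra h'
    have hO' : O'.dir v u := O'.dir_of_not_dir (O.adj_of_dir _ _ hd).symm h'
    have hmem : s(u, v) ∈ O.diffSet O' := ⟨u, v, rfl, hd, hO'⟩
    rw [h] at hmem
    exact hmem
  · intro hd
    by_contra h'
    have hO : O.dir v u := O.dir_of_not_dir (O'.adj_of_dir _ _ hd).symm h'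
    have hmem : s(v, u) ∈ O.diffSet O' := ⟨v, u, rfl, hO, hd⟩
    rw [h] at hmem
    exact hmem

lemma key_induction [Finite V] (O' : GraphOrientation G) :
    ∀ n (O : GraphOrientation G), O.outDegree = O'.outDegree → (O.diffSet O').ncard ≤ n →
      Relation.ReflTransGen (CycleFlipWithinDiff O') O O' := by
  intro n
  induction n with
  | zero =>
    intro O h hle
    have hempty : O.diffSet O' = ∅ := by
      rw [← Set.ncard_eq_zero (Set.toFinite _)]
      omega
    rw [eq_of_diffSet_empty hempty]
  | succ n ih =>
    intro O h hle
    by_cases hd : (O.diffSet O').Nonempty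
    · obtain ⟨C, hcyc, hsub⟩ := exists_dirCycle_subset_diffSet h hd
      have hflip := O.flip_isFlipOn C
      have hdeg : O.outDegree = (O.flip C).outDegree :=
        outDegree_eq_of_cycleFlip ⟨C, hcyc, hflip⟩
      have hd2 : (O.flip C).diffSet O' = O.diffSet O' \ C := diffSet_flip hsub hflip
      have hCne : C.Nonempty := by
        obtain ⟨v, w, hc, _, rfl⟩ := hcyc
        have h3 := hc.three_le_length
        have hlen : w.edges.length = w.length := SimpleGraph.Walk.length_edges w
        have hnn : w.edges ≠ [] := by
          intro h0
          rw [h0] at hlen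
          simp at hlen
          omega
        obtain ⟨e, he⟩ := List.exists_mem_of_ne_nil _ hnn
        exact ⟨e, he⟩
      have hlt : ((O.flip C).diffSet O').ncard < (O.diffSet O').ncard := by
        rw [hd2]
        apply Set.ncard_lt_ncard
        · rw [Set.ssubset_iff_of_subset Set.diff_subset]
          obtain ⟨e, he⟩ := hCne
          exact ⟨e, hsub he, fun h' => h'.2 he⟩
        · exact Set.toFinite _
      exact Relation.ReflTransGen.head ⟨C, hcyc, hsub, hflip⟩
        (ih (O.flip C) (hdeg.symm.trans h) (by omega))
    · have hempty : O.diffSet O' = ∅ := Set.not_nonempty_iff_eq_empty.mp hd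
      rw [eq_of_diffSet_empty hempty]

end GraphOrientation

theorem statement10 {V : Type*} [Fintype V] (G : SimpleGraph V)
    (O O' : GraphOrientation G) :
    (O.outDegree = O'.outDegree ↔ Relation.ReflTransGen GraphOrientation.CycleFlip O O') ∧
      (O.outDegree = O'.outDegree →
        Relation.ReflTransGen (GraphOrientation.CycleFlipWithinDiff O') O O') := by
  have main : ∀ Q : GraphOrientation G, Q.outDegree = O'.outDegree →
      Relation.ReflTransGen (GraphOrientation.CycleFlipWithinDiff O') Q O' := fun Q h =>
    GraphOrientation.key_induction O' (Q.diffSet O').ncard Q h le_rfl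
  refine ⟨⟨fun h => ?_, fun h => ?_⟩, fun h => main O h⟩
  · refine Relation.ReflTransGen.mono ?_ O O' (main O h)
    rintro a b ⟨C, h1, _, h3⟩
    exact ⟨C, h1, h3⟩
  · clear main
    induction h with
    | refl => rfl
    | tail _ hbc ih => exact ih.trans (GraphOrientation.outDegree_eq_of_cycleFlip hbc)
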